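/- Let G be a group and H a weakly maximal subgroup of G. If γ ∈ G \ H is an element of finite order, then γ H γ⁻¹ ≠ H. -/

import Mathlib

/-- A subgroup `H` of a group `G` is weakly maximal if it has infinite index and every
subgroup strictly containing it has finite index. -/
def IsWeaklyMaximal {G : Type*} [Group G] (H : Subgroup G) : Prop :=
  H.index = 0 ∧ ∀ M : Subgroup G, H < M → M.index ≠ 0

theorem conj_ne_of_weaklyMaximal {G : Type*} [Group G] (H : Subgroup G)
    (hH : IsWeaklyMaximal H) (γ : G) (hγH : γ ∉ H) (hord : IsOfFinOrder γ) :
    Subgroup.map (MulAut.conj γ).toMonoidHom H ≠ H := by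
  intro hconj
  -- γ is in the normalizer of H
  have hnorm : γ ∈ Subgroup.normalizer (H : Set G) := by
    rw [Subgroup.mem_normalizer_iff]
    intro h
    constructor
    · intro hh
      have : γ * h * γ⁻¹ ∈ Subgroup.map (MulAut.conj γ).toMonoidHom H :=
        ⟨h, hh, rfl⟩
      rwa [hconj] at this
    · intro hh
      rw [← hconj] at hh
      obtain ⟨x, hx, hxe⟩ := hh
      simp only [MulEquiv.coe_toMonoidHom, MulAut.conj_apply] at hxe
      have hxh : x = h := by
        have := hxe
        have h1 : γ * x = γ * h := by
          have := congrArg (· * γ) this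
          simpa [mul_assoc] using this
        exact mul_left_cancel h1
      rwa [hxh] at hx
  set N := Subgroup.normalizer (H : Set G) with hN
  set γ' : N := ⟨γ, hnorm⟩ with hγ'
  set H' : Subgroup N := H.subgroupOf N with hH'
  set K' : Subgroup N := H' ⊔ Subgroup.zpowers γ' with hK'
  set K : Subgroup G := Subgroup.map N.subtype K' with hKdef
  have hHN : H ≤ N := Subgroup.le_normalizer
  have hHK : H ≤ K := by
    intro x hx
    exact ⟨⟨x, hHN hx⟩, Subgroup.mem_sup_left (by simpa [hH', Subgroup.mem_subgroupOf] using hx), rfl⟩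
  have hγK : γ ∈ K := ⟨γ', Subgroup.mem_sup_right (Subgroup.mem_zpowers γ'), rfl⟩
  have hlt : H < K := lt_of_le_of_ne hHK (fun h => hγH (h ▸ hγK))
  have hKind : K.index ≠ 0 := hH.2 K hlt
  -- H' is normal in N
  haveI : H'.Normal := Subgroup.normal_in_normalizer
  -- the quotient K ⧸ (H.subgroupOf K) is finite
  have hrel : H.relIndex K ≠ 0 := by
    set HK : Subgroup K := H.subgroupOf K with hHK'
    haveI : HK.Normal := by
      rw [Subgroup.normal_subgroupOf_iff hHK]
      intro h k hh hk
      obtain ⟨⟨n, hn⟩, _, rfl⟩ := hk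
      exact (hn h).1 hh
    set π := QuotientGroup.mk' HK with hπ
    set γK : K := ⟨γ, hγK⟩ with hγK'
    have hsurj : ∀ q : K ⧸ HK, ∃ n : ℤ, π γK ^ n = q := by
      intro q
      obtain ⟨k, rfl⟩ := QuotientGroup.mk'_surjective HK q
      obtain ⟨x, hx, hxk⟩ := k.2
      have hx' : x ∈ (K' : Set N) := hx
      rw [hK', Subgroup.normal_mul] at hx'
      obtain ⟨h, hh, z, hz, rfl⟩ := hx'
      obtain ⟨n, rfl⟩ := hz
      refine ⟨n, ?_⟩
      have hγKn : γK ^ n = ⟨γ ^ n, by exact_mod_cast Subgroup.zpow_mem K hγK n⟩ := by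
        ext
        push_cast
        rfl
      have hne : (⟨(h : G), hHK (by simpa [hH', Subgroup.mem_subgroupOf] using hh)⟩ : K)
          * γK ^ n = k := by
        ext
        rw [hγKn]
        rw [← hxk]
        push_cast
        rfl
      rw [← hne, ← map_zpow, map_mul]
      have : π ⟨(h : G), hHK (by simpa [hH', Subgroup.mem_subgroupOf] using hh)⟩ = 1 := by
        rw [hπ, QuotientGroup.mk'_apply, QuotientGroup.eq_one_iff]
        simpa [hHK', hH', Subgroup.mem_subgroupOf] using hh
      rw [this, one_mul, map_zpow]
    have hfin : IsOfFinOrder (π γK) := by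
      have : IsOfFinOrder γK := by
        obtain ⟨n, hn, hpow⟩ := hord.exists_pow_eq_one
        exact isOfFinOrder_iff_pow_eq_one.mpr ⟨n, hn, by ext; push_cast; exact hpow⟩
      exact π.isOfFinOrder this
    haveI : Finite (K ⧸ HK) := by
      have := hfin.finite_zpowers
      have huniv : (Set.univ : Set (K ⧸ HK)) ⊆ (Subgroup.zpowers (π γK) : Set (K ⧸ HK)) := by
        intro q _
        obtain ⟨n, hn⟩ := hsurj q
        exact ⟨n, hn⟩
      exact Set.finite_univ_iff.mp (this.subset huniv)
    rw [Subgroup.relIndex, Subgroup.index_eq_card]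
    exact Nat.card_ne_zero.mpr ⟨⟨1⟩, inferInstance⟩
  have := Subgroup.relIndex_mul_index hHK
  rw [hH.1] at this
  exact mul_ne_zero hrel hKind this
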